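/- Let δ > 0 be a real number, let X be a real n×q matrix, let G and L be real n×n matrices, and form the pre-array T = [ X , √δ·(G + (δ/2)·L) , √(δ³/12)·L ] (horizontal concatenation, size n×(q+2n)). Suppose T = W S Vᵀ where W is an orthogonal n×n matrix, S is a diagonal n×n matrix, and V is a (q+2n)×n matrix with orthonormal columns (VᵀV = I_n). Then W S² Wᵀ = X Xᵀ + (δ²/2)·(G Lᵀ + L Gᵀ) + (δ³/3)·L Lᵀ + δ·G Gᵀ; that is, the SVD factors W and S² read off from the pre-array T reconstruct exactly the predicted covariance computed by the conventional IT-1.5 cubature Kalman filter time update. -/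

import Mathlib

open Matrix

/-- If the IT-1.5 time-update pre-array `T` has SVD `T = W S Vᵀ`,
then `W S² Wᵀ` equals the conventional IT-1.5 predicted covariance. -/
theorem it15_svd_equiv_conventional (n q : ℕ) (δ : ℝ) (hδ : 0 < δ)
    (X : Matrix (Fin n) (Fin q) ℝ)
    (G L : Matrix (Fin n) (Fin n) ℝ)
    (T : Matrix (Fin n) (Fin q ⊕ (Fin n ⊕ Fin n)) ℝ)
    (hT : T = fromCols X
      (fromCols (Real.sqrt δ • (G + (δ / 2) • L))
        (Real.sqrt (δ ^ 3 / 12) • L)))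
    (W : Matrix (Fin n) (Fin n) ℝ) (hW : Wᵀ * W = 1)
    (S : Matrix (Fin n) (Fin n) ℝ) (hS : S.IsDiag)
    (V : Matrix (Fin q ⊕ (Fin n ⊕ Fin n)) (Fin n) ℝ) (hV : Vᵀ * V = 1)
    (hSVD : T = W * S * Vᵀ) :
    W * S ^ 2 * Wᵀ = X * Xᵀ + (δ ^ 2 / 2) • (G * Lᵀ + L * Gᵀ)
      + (δ ^ 3 / 3) • (L * Lᵀ) + δ • (G * Gᵀ) := by
  have hSsym : Sᵀ = S := hS.isSymm
  have key : W * S ^ 2 * Wᵀ = T * Tᵀ := by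
    rw [hSVD]
    simp only [Matrix.transpose_mul, Matrix.transpose_transpose]
    rw [Matrix.mul_assoc, Matrix.mul_assoc, ← Matrix.mul_assoc Vᵀ V, hV, hSsym,
      one_mul, pow_two, Matrix.mul_assoc, Matrix.mul_assoc]
  rw [key, hT]
  rw [Matrix.transpose_fromCols, Matrix.transpose_fromCols,
    Matrix.fromCols_mul_fromRows, Matrix.fromCols_mul_fromRows]
  have h1 : Real.sqrt δ * Real.sqrt δ = δ := Real.mul_self_sqrt hδ.le
  have h2 : Real.sqrt (δ ^ 3 / 12) * Real.sqrt (δ ^ 3 / 12) = δ ^ 3 / 12 :=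
    Real.mul_self_sqrt (by positivity)
  simp only [Matrix.transpose_smul, Matrix.smul_mul, Matrix.mul_smul, smul_smul,
    h1, h2, Matrix.transpose_add, Matrix.add_mul, Matrix.mul_add]
  rw [← sub_eq_zero]
  ext i j
  simp only [Matrix.add_apply, Matrix.smul_apply, Matrix.sub_apply, Matrix.zero_apply,
    smul_eq_mul]
  ring_nf
  simp only [Real.sq_sqrt hδ.le]
  ring
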